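/- A Lagrangian W of V contains no perfect cube if and only if W lies in the SL(2,ℂ)-orbit of the Lagrangian span{X²Y, X³ + Y³}; in particular, SL(2,ℂ) acts transitively on the set of Lagrangians of V containing no perfect cube. -/

import Mathlib

noncomputable section

open MvPolynomial

/-- The polynomial ring `ℂ[X,Y]`. -/
abbrev P2 : Type := MvPolynomial (Fin 2) ℂ

/-- The variable `X`. -/
def Xv : P2 := X 0

/-- The variable `Y`. -/
def Yv : P2 := X 1

/-- `V`: the space of homogeneous cubic polynomials in `X, Y`. -/
def Vcubic : Submodule ℂ P2 := homogeneousSubmodule (Fin 2) ℂ 3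

/-- The coefficient of `X^i Y^j`. -/
def cf (i j : ℕ) (p : P2) : ℂ := coeff (Finsupp.single 0 i + Finsupp.single 1 j) p

/-- The alternating bilinear form `ω` with `ω(X³,Y³) = 1`, `ω(X²Y,XY²) = -1/3`,
all other pairings of distinct basis vectors being `0`. -/
def omegaForm (p q : P2) : ℂ :=
  cf 3 0 p * cf 0 3 q - cf 0 3 p * cf 3 0 q
    - (1 / 3) * (cf 2 1 p * cf 1 2 q - cf 1 2 p * cf 2 1 q)

/-- The linear form `b X - a Y` associated to the point `[a : b] ∈ ℂℙ¹`. -/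
def lf (a b : ℂ) : P2 := C b * Xv - C a * Yv

/-- A Lagrangian of `V`: a 2-dimensional subspace contained in `V` on which `ω` vanishes. -/
def IsLagrangian (W : Submodule ℂ P2) : Prop :=
  W ≤ Vcubic ∧ Module.finrank ℂ W = 2 ∧ ∀ p ∈ W, ∀ q ∈ W, omegaForm p q = 0

/-- A perfect cube: a nonzero element of the form `c • (bX - aY)³`. -/
def IsPerfectCube (p : P2) : Prop :=
  ∃ c a b : ℂ, c ≠ 0 ∧ (a ≠ 0 ∨ b ≠ 0) ∧ p = C c * lf a b ^ 3

/-- The action of `SL(2,ℂ)` on `ℂ[X,Y]` by linear substitution of the variables. -/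
def subst (g : Matrix.SpecialLinearGroup (Fin 2) ℂ) : P2 →ₐ[ℂ] P2 :=
  aeval (fun i => C (g.1 i 0) * Xv + C (g.1 i 1) * Yv)

/-- The induced action of `SL(2,ℂ)` on subspaces of `ℂ[X,Y]`. -/
def mapAct (g : Matrix.SpecialLinearGroup (Fin 2) ℂ) (W : Submodule ℂ P2) :
    Submodule ℂ P2 :=
  W.map (subst g).toLinearMap

/-- The `SL(2,ℂ)`-orbit of a subspace. -/
def slOrbit (W₀ : Submodule ℂ P2) : Set (Submodule ℂ P2) := {W | ∃ g, W = mapAct g W₀}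

/-- The Lagrangian `span{X³, X²Y}`. -/
def L₁ : Submodule ℂ P2 := Submodule.span ℂ {Xv ^ 3, Xv ^ 2 * Yv}

/-- The Lagrangian `span{X³, XY²}`. -/
def L₂ : Submodule ℂ P2 := Submodule.span ℂ {Xv ^ 3, Xv * Yv ^ 2}

/-- The Lagrangian `span{X²Y, X³ + Y³}`. -/
def L₃ : Submodule ℂ P2 := Submodule.span ℂ {Xv ^ 2 * Yv, Xv ^ 3 + Yv ^ 3}


/-- Canonical cubic form. -/
def canon (a b c d : ℂ) : P2 := C a * Xv^3 + C b * Xv^2*Yv + C c * Xv*Yv^2 + C d * Yv^3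

def mexp (i j : ℕ) : Fin 2 →₀ ℕ := Finsupp.single 0 i + Finsupp.single 1 j

lemma mexp_apply0 (i j : ℕ) : mexp i j 0 = i := by simp [mexp]
lemma mexp_apply1 (i j : ℕ) : mexp i j 1 = j := by simp [mexp]

lemma mexp_eq_iff {i j k l : ℕ} : mexp i j = mexp k l ↔ i = k ∧ j = l := by
  constructor
  · intro h
    constructor
    · have := congrArg (fun f => f 0) h; simpa [mexp_apply0] using this
    · have := congrArg (fun f => f 1) h; simpa [mexp_apply1] using this
  · rintro ⟨rfl, rfl⟩; rfl

lemma eq_mexp (m : Fin 2 →₀ ℕ) : m = mexp (m 0) (m 1) := by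
  ext x
  fin_cases x
  · simp [mexp_apply0]
  · simp [mexp_apply1]

lemma monomial_eq_mexp (i j : ℕ) (e : ℂ) :
    C e * Xv^i * Yv^j = monomial (mexp i j) e := by
  rw [Xv, Yv, X_pow_eq_monomial, X_pow_eq_monomial, C_mul_monomial, monomial_mul, mexp]
  simp

lemma cf_monomial (i j k l : ℕ) (e : ℂ) :
    cf i j (C e * Xv^k * Yv^l) = if k = i ∧ l = j then e else 0 := by
  rw [monomial_eq_mexp, cf]
  rw [show Finsupp.single (0 : Fin 2) i + Finsupp.single 1 j = mexp i j from rfl]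
  rw [coeff_monomial]
  by_cases h : k = i ∧ l = j
  · rw [if_pos (mexp_eq_iff.2 h), if_pos h]
  · rw [if_neg (fun hh => h (mexp_eq_iff.1 hh)), if_neg h]

lemma cf_add (i j : ℕ) (p q : P2) : cf i j (p + q) = cf i j p + cf i j q := by
  simp [cf, coeff_add]

lemma cf_smul (i j : ℕ) (e : ℂ) (p : P2) : cf i j (e • p) = e * cf i j p := by
  simp [cf]

lemma canon_eq_monomials (a b c d : ℂ) :
    canon a b c d = monomial (mexp 3 0) a + monomial (mexp 2 1) b
      + monomial (mexp 1 2) c + monomial (mexp 0 3) d := by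
  rw [canon, ← monomial_eq_mexp 3 0 a, ← monomial_eq_mexp 2 1 b,
    ← monomial_eq_mexp 1 2 c, ← monomial_eq_mexp 0 3 d]
  ring

lemma cf_mexp_monomial (i j k l : ℕ) (e : ℂ) :
    cf i j (monomial (mexp k l) e) = if k = i ∧ l = j then e else 0 := by
  rw [← monomial_eq_mexp, cf_monomial]

lemma cf_canon (a b c d : ℂ) :
    cf 3 0 (canon a b c d) = a ∧ cf 2 1 (canon a b c d) = b ∧
    cf 1 2 (canon a b c d) = c ∧ cf 0 3 (canon a b c d) = d := by
  refine ⟨?_, ?_, ?_, ?_⟩ <;>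
    rw [canon_eq_monomials] <;>
    simp [cf_add, cf_mexp_monomial]
lemma cf_canon1 (a b c d : ℂ) : cf 3 0 (canon a b c d) = a := (cf_canon a b c d).1
lemma cf_canon2 (a b c d : ℂ) : cf 2 1 (canon a b c d) = b := (cf_canon a b c d).2.1
lemma cf_canon3 (a b c d : ℂ) : cf 1 2 (canon a b c d) = c := (cf_canon a b c d).2.2.1
lemma cf_canon4 (a b c d : ℂ) : cf 0 3 (canon a b c d) = d := (cf_canon a b c d).2.2.2

lemma canon_inj {a b c d a' b' c' d' : ℂ} (h : canon a b c d = canon a' b' c' d') :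
    a = a' ∧ b = b' ∧ c = c' ∧ d = d' := by
  refine ⟨?_, ?_, ?_, ?_⟩
  · rw [← cf_canon1 a b c d, h, cf_canon1]
  · rw [← cf_canon2 a b c d, h, cf_canon2]
  · rw [← cf_canon3 a b c d, h, cf_canon3]
  · rw [← cf_canon4 a b c d, h, cf_canon4]

/-- Every homogeneous cubic equals its canonical form. -/
lemma eq_canon_of_mem {p : P2} (hp : p ∈ Vcubic) :
    p = canon (cf 3 0 p) (cf 2 1 p) (cf 1 2 p) (cf 0 3 p) := by
  have hh : p.IsHomogeneous 3 := (mem_homogeneousSubmodule 3 p).1 hp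
  apply MvPolynomial.ext
  intro m
  rw [canon_eq_monomials]
  have hm := eq_mexp m
  by_cases hdeg : m 0 + m 1 = 3
  · -- m is one of the four
    have h0 : m 0 ≤ 3 := by omega
    rw [hm]
    have key : ∀ i j : ℕ, coeff (mexp i j) (monomial (mexp 3 0) (cf 3 0 p) + monomial (mexp 2 1) (cf 2 1 p)
        + monomial (mexp 1 2) (cf 1 2 p) + monomial (mexp 0 3) (cf 0 3 p)) = cf i j
        (monomial (mexp 3 0) (cf 3 0 p) + monomial (mexp 2 1) (cf 2 1 p)
        + monomial (mexp 1 2) (cf 1 2 p) + monomial (mexp 0 3) (cf 0 3 p)) := by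
      intro i j; rfl
    interval_cases h1 : m 0
    · have h2 : m 1 = 3 := by omega
      rw [h2, key, cf_add, cf_add, cf_add]
      simp only [cf_mexp_monomial]
      norm_num
      rfl
    · have h2 : m 1 = 2 := by omega
      rw [h2, key, cf_add, cf_add, cf_add]
      simp only [cf_mexp_monomial]
      norm_num
      rfl
    · have h2 : m 1 = 1 := by omega
      rw [h2, key, cf_add, cf_add, cf_add]
      simp only [cf_mexp_monomial]
      norm_num
      rfl
    · have h2 : m 1 = 0 := by omega
      rw [h2, key, cf_add, cf_add, cf_add]
      simp only [cf_mexp_monomial]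
      norm_num
      rfl
  · -- both sides zero
    have hdm : (mexp (m 0) (m 1)).degree = m 0 + m 1 := by
      rw [mexp, Finsupp.degree_eq_weight_one]
      simp [Finsupp.weight_apply, Finsupp.sum_add_index]
    have hl : coeff m p = 0 := by
      apply hh.coeff_eq_zero
      rw [hm, hdm]
      omega
    rw [hl]
    rw [hm]
    have key : ∀ i j : ℕ, coeff (mexp i j) (monomial (mexp 3 0) (cf 3 0 p) + monomial (mexp 2 1) (cf 2 1 p)
        + monomial (mexp 1 2) (cf 1 2 p) + monomial (mexp 0 3) (cf 0 3 p)) = cf i j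
        (monomial (mexp 3 0) (cf 3 0 p) + monomial (mexp 2 1) (cf 2 1 p)
        + monomial (mexp 1 2) (cf 1 2 p) + monomial (mexp 0 3) (cf 0 3 p)) := by
      intro i j; rfl
    rw [key, cf_add, cf_add, cf_add]
    simp only [cf_mexp_monomial]
    have h30 : ¬(3 = m 0 ∧ 0 = m 1) := by omega
    have h21 : ¬(2 = m 0 ∧ 1 = m 1) := by omega
    have h12 : ¬(1 = m 0 ∧ 2 = m 1) := by omega
    have h03 : ¬(0 = m 0 ∧ 3 = m 1) := by omega
    rw [if_neg h30, if_neg h21, if_neg h12, if_neg h03]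
    ring
lemma subst_Xv (g : Matrix.SpecialLinearGroup (Fin 2) ℂ) :
    subst g Xv = C (g.1 0 0) * Xv + C (g.1 0 1) * Yv := by
  simp [subst, Xv]

lemma subst_Yv (g : Matrix.SpecialLinearGroup (Fin 2) ℂ) :
    subst g Yv = C (g.1 1 0) * Xv + C (g.1 1 1) * Yv := by
  simp [subst, Yv, Xv]

lemma det_g (g : Matrix.SpecialLinearGroup (Fin 2) ℂ) :
    g.1 0 0 * g.1 1 1 - g.1 0 1 * g.1 1 0 = 1 := by
  have := g.2
  rwa [Matrix.det_fin_two] at this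

lemma subst_C (g : Matrix.SpecialLinearGroup (Fin 2) ℂ) (x : ℂ) : subst g (C x) = C x := by
  simp [subst]

/-- Explicit expansion of the substitution action on a canonical cubic. -/
lemma subst_canon (g : Matrix.SpecialLinearGroup (Fin 2) ℂ) (a b c d : ℂ) :
    subst g (canon a b c d) =
      canon
        (a * g.1 0 0^3 + b * g.1 0 0^2 * g.1 1 0 + c * g.1 0 0 * g.1 1 0^2 + d * g.1 1 0^3)
        (3*a*g.1 0 0^2*g.1 0 1 + b*(g.1 0 0^2*g.1 1 1 + 2*g.1 0 0*g.1 0 1*g.1 1 0)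
          + c*(2*g.1 0 0*g.1 1 0*g.1 1 1 + g.1 0 1*g.1 1 0^2) + 3*d*g.1 1 0^2*g.1 1 1)
        (3*a*g.1 0 0*g.1 0 1^2 + b*(2*g.1 0 0*g.1 0 1*g.1 1 1 + g.1 0 1^2*g.1 1 0)
          + c*(g.1 0 0*g.1 1 1^2 + 2*g.1 0 1*g.1 1 0*g.1 1 1) + 3*d*g.1 1 0*g.1 1 1^2)
        (a * g.1 0 1^3 + b * g.1 0 1^2 * g.1 1 1 + c * g.1 0 1 * g.1 1 1^2 + d * g.1 1 1^3) := by
  rw [canon]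
  simp only [map_add, map_mul, map_pow, subst_Xv, subst_Yv, subst_C]
  rw [canon]
  simp only [C_add, C_mul, C_pow, map_ofNat]
  ring
lemma subst_subst (g h : Matrix.SpecialLinearGroup (Fin 2) ℂ) (p : P2) :
    subst g (subst h p) = subst (h * g) p := by
  have : (subst g).comp (subst h) = subst (h * g) := by
    apply MvPolynomial.algHom_ext
    intro i
    simp only [AlgHom.comp_apply, subst, aeval_X, map_add, map_mul, aeval_C]
    fin_cases i <;>
      simp [Xv, Yv, Matrix.SpecialLinearGroup.coe_mul, Matrix.mul_apply, Fin.sum_univ_two,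
        C_add, C_mul] <;> ring
  calc subst g (subst h p) = ((subst g).comp (subst h)) p := rfl
    _ = subst (h * g) p := by rw [this]

lemma subst_one (p : P2) : subst 1 p = p := by
  have : subst (1 : Matrix.SpecialLinearGroup (Fin 2) ℂ) = AlgHom.id ℂ P2 := by
    apply MvPolynomial.algHom_ext
    intro i
    fin_cases i <;> simp [subst, Xv, Yv]
  rw [this]; rfl

lemma subst_inv_subst (g : Matrix.SpecialLinearGroup (Fin 2) ℂ) (p : P2) :
    subst g⁻¹ (subst g p) = p := by
  rw [subst_subst, mul_inv_cancel, subst_one]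

lemma subst_lf (g : Matrix.SpecialLinearGroup (Fin 2) ℂ) (a b : ℂ) :
    subst g (lf a b) = lf (a * g.1 1 1 - b * g.1 0 1) (b * g.1 0 0 - a * g.1 1 0) := by
  rw [lf, map_sub, map_mul, map_mul, subst_C, subst_C, subst_Xv, subst_Yv, lf]
  simp only [C_sub, C_mul]
  ring

lemma lf_eq_zero_iff (a b : ℂ) : lf a b = 0 ↔ a = 0 ∧ b = 0 := by
  constructor
  · intro h
    have hb : coeff (Finsupp.single 0 1) (lf a b) = b := by
      simp [lf, Xv, Yv, coeff_X', Finsupp.single_left_inj]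
    have ha : coeff (Finsupp.single 1 1) (lf a b) = -a := by
      simp [lf, Xv, Yv, coeff_X', Finsupp.single_left_inj]
    rw [h] at ha hb
    simp at ha hb
    exact ⟨by rw [← neg_neg a, ← ha]; ring, hb.symm⟩
  · rintro ⟨rfl, rfl⟩; simp [lf]

lemma cube_canon (c a b : ℂ) :
    C c * lf a b ^ 3 = canon (c*b^3) (-(3*c*a*b^2)) (3*c*a^2*b) (-(c*a^3)) := by
  rw [lf, canon]
  simp only [C_mul, C_neg, C_pow, map_ofNat]
  ring

lemma isPerfectCube_subst {p : P2} (g : Matrix.SpecialLinearGroup (Fin 2) ℂ)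
    (hp : IsPerfectCube p) : IsPerfectCube (subst g p) := by
  obtain ⟨c, a, b, hc, hab, rfl⟩ := hp
  refine ⟨c, a * g.1 1 1 - b * g.1 0 1, b * g.1 0 0 - a * g.1 1 0, hc, ?_, by
    rw [map_mul, map_pow, subst_C, subst_lf]⟩
  by_contra hcon
  push_neg at hcon
  obtain ⟨h1, h2⟩ := hcon
  have hd := det_g g
  have ha : a = 0 := by linear_combination g.1 0 0 * h1 + g.1 0 1 * h2 - a * hd
  have hb : b = 0 := by linear_combination g.1 1 0 * h1 + g.1 1 1 * h2 - b * hd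
  rcases hab with h | h <;> exact h (by assumption)
lemma omega_canon (a b c d a' b' c' d' : ℂ) :
    omegaForm (canon a b c d) (canon a' b' c' d') =
      a * d' - d * a' - (1/3) * (b * c' - c * b') := by
  rw [omegaForm, cf_canon1, cf_canon2, cf_canon3, cf_canon4,
    cf_canon1, cf_canon2, cf_canon3, cf_canon4]

/-- `ω` is invariant under the `SL₂`-action. -/
lemma omega_subst (g : Matrix.SpecialLinearGroup (Fin 2) ℂ) (a b c d a' b' c' d' : ℂ) :
    omegaForm (subst g (canon a b c d)) (subst g (canon a' b' c' d')) =
      omegaForm (canon a b c d) (canon a' b' c' d') := by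
  rw [subst_canon, subst_canon, omega_canon, omega_canon]
  have hd := det_g g
  set α := g.1 0 0; set β := g.1 0 1; set γ := g.1 1 0; set δ := g.1 1 1
  linear_combination ((α*δ - β*γ)^2 + (α*δ - β*γ) + 1) *
    (a * d' - d * a' - (1/3) * (b * c' - c * b')) * hd

lemma mapAct_mapAct (g h : Matrix.SpecialLinearGroup (Fin 2) ℂ) (W : Submodule ℂ P2) :
    mapAct g (mapAct h W) = mapAct (h * g) W := by
  have hcomp : (subst g).toLinearMap.comp (subst h).toLinearMap = (subst (h*g)).toLinearMap :=
    LinearMap.ext (subst_subst g h)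
  rw [mapAct, mapAct, mapAct, ← Submodule.map_comp, hcomp]

lemma mapAct_one (W : Submodule ℂ P2) : mapAct 1 W = W := by
  have h1 : (subst (1 : Matrix.SpecialLinearGroup (Fin 2) ℂ)).toLinearMap = LinearMap.id :=
    LinearMap.ext subst_one
  rw [mapAct, h1, Submodule.map_id]

lemma mapAct_inv_eq {g : Matrix.SpecialLinearGroup (Fin 2) ℂ} {W U : Submodule ℂ P2}
    (h : mapAct g W = U) : W = mapAct g⁻¹ U := by
  rw [← h, mapAct_mapAct, mul_inv_cancel, mapAct_one]

lemma mapAct_span_pair (g : Matrix.SpecialLinearGroup (Fin 2) ℂ) (x y : P2) :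
    mapAct g (Submodule.span ℂ {x, y}) = Submodule.span ℂ {subst g x, subst g y} := by
  rw [mapAct, Submodule.map_span]
  congr 1
  simp [Set.image_insert_eq]

lemma span_pair_smul {x y : P2} (c d : ℂ) (hc : c ≠ 0) (hd : d ≠ 0) :
    Submodule.span ℂ {c • x, d • y} = Submodule.span ℂ {x, y} := by
  apply le_antisymm
  · apply Submodule.span_le.2
    rintro z (rfl | rfl)
    · exact Submodule.smul_mem _ _ (Submodule.subset_span (by simp))
    · exact Submodule.smul_mem _ _ (Submodule.subset_span (by simp))
  · apply Submodule.span_le.2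
    rintro z (rfl | rfl)
    · have hm := Submodule.smul_mem (Submodule.span ℂ {c • z, d • y}) c⁻¹
        (Submodule.subset_span (show c • z ∈ _ by simp))
      rwa [smul_smul, inv_mul_cancel₀ hc, one_smul] at hm
    · have hm := Submodule.smul_mem (Submodule.span ℂ {c • x, d • z}) d⁻¹
        (Submodule.subset_span (show d • z ∈ ({c • x, d • z} : Set P2) by simp))
      rwa [smul_smul, inv_mul_cancel₀ hd, one_smul] at hm

lemma span_pair_sub_smul (x y : P2) (k : ℂ) :
    Submodule.span ℂ {x, y - k • x} = Submodule.span ℂ {x, y} := by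
  apply le_antisymm
  · apply Submodule.span_le.2
    rintro z (rfl | rfl)
    · exact Submodule.subset_span (by simp)
    · exact Submodule.sub_mem _ (Submodule.subset_span (by simp))
        (Submodule.smul_mem _ _ (Submodule.subset_span (by simp)))
  · apply Submodule.span_le.2
    rintro z (rfl | rfl)
    · exact Submodule.subset_span (by simp)
    · have : z = (z - k • x) + k • x := by abel
      rw [this]
      exact Submodule.add_mem _ (Submodule.subset_span (by simp))
        (Submodule.smul_mem _ _ (Submodule.subset_span (by simp)))
/-- Discriminant of the binary cubic with coefficients `a b c d`. -/
def disc (a b c d : ℂ) : ℂ := 18*a*b*c*d - 4*b^3*d + b^2*c^2 - 4*a*c^3 - 27*a^2*d^2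

lemma disc_smul (s x y z w : ℂ) : disc (s*x) (s*y) (s*z) (s*w) = s^4 * disc x y z w := by
  rw [disc, disc]; ring

open Polynomial in
/-- In a pencil of binary cubics there is a member with vanishing discriminant. -/
lemma exists_disc_zero (a b c d a' b' c' d' : ℂ) :
    ∃ s t : ℂ, ¬(s = 0 ∧ t = 0) ∧
      disc (s*a+t*a') (s*b+t*b') (s*c+t*c') (s*d+t*d') = 0 := by
  classical
  by_cases hp : disc a b c d = 0
  · exact ⟨1, 0, by norm_num, by simpa using hp⟩
  -- the pencil polynomial φ(t) = disc (p + t q)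
  set A : Polynomial ℂ := Polynomial.C a + Polynomial.C a' * Polynomial.X with hA
  set B : Polynomial ℂ := Polynomial.C b + Polynomial.C b' * Polynomial.X with hB
  set Cp : Polynomial ℂ := Polynomial.C c + Polynomial.C c' * Polynomial.X with hC
  set D : Polynomial ℂ := Polynomial.C d + Polynomial.C d' * Polynomial.X with hD
  set φ : Polynomial ℂ := 18*A*B*Cp*D - 4*B^3*D + B^2*Cp^2 - 4*A*Cp^3 - 27*A^2*D^2 with hφ
  have heval : ∀ t : ℂ, φ.eval t = disc (a+t*a') (b+t*b') (c+t*c') (d+t*d') := by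
    intro t
    simp only [hφ, hA, hB, hC, hD, disc, Polynomial.eval_add, Polynomial.eval_mul, Polynomial.eval_sub, Polynomial.eval_pow, Polynomial.eval_C,
      Polynomial.eval_X, Polynomial.eval_ofNat]
    ring
  by_cases hdeg : 0 < φ.degree
  · obtain ⟨t₀, ht₀⟩ := Complex.exists_root hdeg
    refine ⟨1, t₀, by norm_num, ?_⟩
    have := heval t₀
    rw [Polynomial.IsRoot.def] at ht₀
    rw [ht₀] at this
    simp only [one_mul]
    exact this.symm
  · -- φ is constant; then disc q = 0
    have hconst : ∀ t : ℂ, φ.eval t = φ.coeff 0 := by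
      intro t
      have h0 : φ.natDegree = 0 := by
        by_contra hne
        exact hdeg (Polynomial.natDegree_pos_iff_degree_pos.1 (Nat.pos_of_ne_zero hne))
      rw [Polynomial.eval_eq_sum_range, h0]
      simp
    -- homogeneity: disc (t p + q) = t^4 * disc (p + t⁻¹ q) for t ≠ 0
    refine ⟨0, 1, by norm_num, ?_⟩
    simp only [zero_mul, one_mul, zero_add]
    -- show disc a' b' c' d' = 0
    -- ψ(t) := disc (t a + a', ...) equals t^4 * φ.eval (1/t) = t^4 * φ.coeff 0 for t ≠ 0
    set ψ : Polynomial ℂ := 18*(Polynomial.C a * Polynomial.X + Polynomial.C a')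
        *(Polynomial.C b * Polynomial.X + Polynomial.C b')
        *(Polynomial.C c * Polynomial.X + Polynomial.C c')
        *(Polynomial.C d * Polynomial.X + Polynomial.C d')
      - 4*(Polynomial.C b * Polynomial.X + Polynomial.C b')^3*(Polynomial.C d * Polynomial.X + Polynomial.C d')
      + (Polynomial.C b * Polynomial.X + Polynomial.C b')^2*(Polynomial.C c * Polynomial.X + Polynomial.C c')^2
      - 4*(Polynomial.C a * Polynomial.X + Polynomial.C a')*(Polynomial.C c * Polynomial.X + Polynomial.C c')^3
      - 27*(Polynomial.C a * Polynomial.X + Polynomial.C a')^2*(Polynomial.C d * Polynomial.X + Polynomial.C d')^2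
      with hψ
    have hψeval : ∀ t : ℂ, ψ.eval t = disc (t*a+a') (t*b+b') (t*c+c') (t*d+d') := by
      intro t
      simp only [hψ, disc, Polynomial.eval_add, Polynomial.eval_mul, Polynomial.eval_sub, Polynomial.eval_pow, Polynomial.eval_C, Polynomial.eval_X, Polynomial.eval_ofNat]
      ring
    have hagree : ∀ t : ℂ, t ≠ 0 → ψ.eval t = (Polynomial.C (φ.coeff 0) * Polynomial.X^4).eval t := by
      intro t ht
      set u := t⁻¹ with hu
      have htu : t * u = 1 := mul_inv_cancel₀ ht
      have e1 : t*a + a' = t*(a + u*a') := by linear_combination (-a') * htu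
      have e2 : t*b + b' = t*(b + u*b') := by linear_combination (-b') * htu
      have e3 : t*c + c' = t*(c + u*c') := by linear_combination (-c') * htu
      have e4 : t*d + d' = t*(d + u*d') := by linear_combination (-d') * htu
      rw [hψeval, e1, e2, e3, e4, disc_smul, ← heval u, hconst]
      rw [Polynomial.eval_mul, Polynomial.eval_pow, Polynomial.eval_C, Polynomial.eval_X]
      ring
    have hpoly : ψ = Polynomial.C (φ.coeff 0) * Polynomial.X^4 := by
      have : (ψ - Polynomial.C (φ.coeff 0) * Polynomial.X^4) = 0 := by
        apply Polynomial.eq_zero_of_infinite_isRoot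
        apply Set.Infinite.mono (s := {x : ℂ | x ≠ 0})
        · intro x hx
          simp only [Set.mem_setOf_eq, Polynomial.IsRoot.def, Polynomial.eval_sub]
          rw [hagree x hx]
          ring
        · exact Set.Finite.infinite_compl (Set.finite_singleton (0:ℂ))
      have := sub_eq_zero.1 this
      exact this
    have : disc a' b' c' d' = ψ.eval 0 := by rw [hψeval]; norm_num
    rw [this, hpoly]
    simp
open Polynomial in
lemma vieta_cubic {a b c d : ℂ} (ha : a ≠ 0) : ∃ r1 r2 r3 : ℂ,
    b = -(a*(r1+r2+r3)) ∧ c = a*(r1*r2+r1*r3+r2*r3) ∧ d = -(a*(r1*r2*r3)) := by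
  set f : Polynomial ℂ := Polynomial.C a * Polynomial.X^3 + Polynomial.C b * Polynomial.X^2
    + Polynomial.C c * Polynomial.X + Polynomial.C d with hf
  have hsp : f.Splits := IsAlgClosed.splits f
  have hcard : Multiset.card f.roots = 3 := by
    rw [Polynomial.splits_iff_card_roots.1 hsp, Polynomial.natDegree_cubic ha]
  obtain ⟨r1, r2, r3, hroots⟩ := Multiset.card_eq_three.1 hcard
  have hprod := hsp.eq_prod_roots
  rw [hroots, Polynomial.leadingCoeff_cubic ha] at hprod
  simp only [Multiset.insert_eq_cons, Multiset.map_cons, Multiset.map_singleton,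
    Multiset.prod_cons, Multiset.prod_singleton] at hprod
  have hexp : f = Polynomial.C a * Polynomial.X^3
      + Polynomial.C (-(a*(r1+r2+r3))) * Polynomial.X^2
      + Polynomial.C (a*(r1*r2+r1*r3+r2*r3)) * Polynomial.X
      + Polynomial.C (-(a*(r1*r2*r3))) := by
    rw [hprod]
    simp only [map_neg, map_mul, map_add]
    ring
  rw [hf] at hexp
  refine ⟨r1, r2, r3, ?_, ?_, ?_⟩
  · have := congrArg (fun p => Polynomial.coeff p 2) hexp
    simpa [Polynomial.coeff_add, Polynomial.coeff_C_mul, Polynomial.coeff_X_pow, Polynomial.coeff_C, Polynomial.coeff_X, Polynomial.coeff_mul_X, -map_neg, -map_mul, -map_add, -neg_mul] using this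
  · have := congrArg (fun p => Polynomial.coeff p 1) hexp
    simpa [Polynomial.coeff_add, Polynomial.coeff_C_mul, Polynomial.coeff_X_pow, Polynomial.coeff_C, Polynomial.coeff_X, Polynomial.coeff_mul_X, -map_neg, -map_mul, -map_add, -neg_mul] using this
  · have := congrArg (fun p => Polynomial.coeff p 0) hexp
    simpa [Polynomial.coeff_add, Polynomial.coeff_C_mul, Polynomial.coeff_X_pow, Polynomial.coeff_C, Polynomial.coeff_X, Polynomial.coeff_mul_X, -map_neg, -map_mul, -map_add, -neg_mul] using this
lemma canon_factor (a r1 r2 r3 : ℂ) :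
    canon a (-(a*(r1+r2+r3))) (a*(r1*r2+r1*r3+r2*r3)) (-(a*(r1*r2*r3)))
      = C a * lf r1 1 * lf r2 1 * lf r3 1 := by
  rw [canon, lf, lf, lf]
  simp only [C_neg, C_mul, C_add, C_1, map_ofNat]
  ring

/-- A nonzero binary cubic with vanishing discriminant has a repeated root. -/
lemma factor_of_disc_zero {a b c d : ℂ} (h : disc a b c d = 0)
    (hne : ¬(a = 0 ∧ b = 0 ∧ c = 0 ∧ d = 0)) :
    ∃ e u v s t : ℂ, e ≠ 0 ∧ ¬(u = 0 ∧ v = 0) ∧ ¬(s = 0 ∧ t = 0) ∧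
      canon a b c d = C e * lf u v ^ 2 * lf s t := by
  by_cases ha : a = 0
  · subst ha
    by_cases hb : b = 0
    · subst hb
      by_cases hc : c = 0
      · subst hc
        have hd : d ≠ 0 := fun hd => hne ⟨rfl, rfl, rfl, hd⟩
        refine ⟨d, -1, 0, -1, 0, hd, by simp, by simp, ?_⟩
        rw [canon, lf]
        simp only [map_neg, C_0, C_1]
        ring
      · -- c ≠ 0 : Y²(cX + dY)
        refine ⟨1, -1, 0, -d, c, one_ne_zero, by simp, fun hh => hc hh.2, ?_⟩
        rw [canon, lf, lf]
        simp only [map_neg, C_0, C_1]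
        ring
    · -- b ≠ 0, c² = 4bd
      have hkey : c^2 = 4*b*d := by
        have : b^2 * (c^2 - 4*b*d) = 0 := by rw [disc] at h; linear_combination h
        rcases mul_eq_zero.1 this with h1 | h1
        · exact absurd (pow_eq_zero_iff (n := 2) (by norm_num) |>.1 h1) hb
        · linear_combination h1
      obtain ⟨e, he⟩ : ∃ e : ℂ, e = c/(2*b) := ⟨_, rfl⟩
      have hc2 : c = 2*b*e := by rw [he]; field_simp
      have hd2 : d = b*e^2 := by
        have hb0 : b * (d - b*e^2) = 0 := by linear_combination (-1/4)*hkey + (1/4)*(c+2*b*e)*hc2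
        linear_combination (mul_eq_zero.1 hb0).resolve_left hb
      refine ⟨b, -e, 1, -1, 0, hb, by simp, by simp, ?_⟩
      rw [hc2, hd2, canon, lf, lf]
      simp only [map_neg, C_0, C_1, neg_neg, C_mul, C_pow, map_ofNat]
      ring
  · obtain ⟨r1, r2, r3, hb, hc, hd⟩ := vieta_cubic (a := a) (b := b) (c := c) (d := d) ha
    have hdisc : a^4 * ((r1-r2)*(r1-r3)*(r2-r3))^2 = 0 := by
      rw [disc, hb, hc, hd] at h
      linear_combination h
    have hz : (r1-r2)*(r1-r3)*(r2-r3) = 0 := by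
      have h4 : (a:ℂ)^4 ≠ 0 := pow_ne_zero _ ha
      have := mul_eq_zero.1 hdisc
      rcases this with h1 | h1
      · exact absurd h1 h4
      · exact pow_eq_zero_iff (n := 2) (by norm_num) |>.1 h1
    have hcanon : canon a b c d = C a * lf r1 1 * lf r2 1 * lf r3 1 := by
      rw [hb, hc, hd]; exact canon_factor a r1 r2 r3
    rcases mul_eq_zero.1 hz with h1 | h1
    · rcases mul_eq_zero.1 h1 with h2 | h2
      · -- r1 = r2
        have : r1 = r2 := by linear_combination h2
        refine ⟨a, r1, 1, r3, 1, ha, by simp, by simp, ?_⟩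
        rw [hcanon, ← this]; ring
      · -- r1 = r3
        have : r1 = r3 := by linear_combination h2
        refine ⟨a, r1, 1, r2, 1, ha, by simp, by simp, ?_⟩
        rw [hcanon, ← this]; ring
    · -- r2 = r3
      have : r2 = r3 := by linear_combination h1
      refine ⟨a, r2, 1, r1, 1, ha, by simp, by simp, ?_⟩
      rw [hcanon, ← this]; ring
lemma canon_add (a b c d a' b' c' d' : ℂ) :
    canon a b c d + canon a' b' c' d' = canon (a+a') (b+b') (c+c') (d+d') := by
  rw [canon, canon, canon]
  simp only [C_add]
  ring

lemma smul_canon (k a b c d : ℂ) : k • canon a b c d = canon (k*a) (k*b) (k*c) (k*d) := by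
  rw [canon, canon, smul_eq_C_mul]
  simp only [C_mul]
  ring

lemma canon_sub (a b c d a' b' c' d' : ℂ) :
    canon a b c d - canon a' b' c' d' = canon (a-a') (b-b') (c-c') (d-d') := by
  rw [canon, canon, canon]
  simp only [C_sub]
  ring

lemma canon_zero : canon 0 0 0 0 = 0 := by simp [canon]

set_option synthInstance.maxHeartbeats 1000000 in
/-- Completing a nonzero vector of a 2-dimensional space to a basis. -/
lemma exists_basis_pair {W : Submodule ℂ P2} (h2 : Module.finrank ℂ W = 2)
    {r : P2} (hr : r ∈ W) (hr0 : r ≠ 0) :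
    ∃ q, q ∈ W ∧ q ∉ Submodule.span ℂ {r} ∧ W = Submodule.span ℂ {r, q} := by
  have hfd : FiniteDimensional ℂ W := by
    have : (0:ℕ) < Module.finrank ℂ W := by omega
    exact Module.finite_of_finrank_pos this
  have hle : Submodule.span ℂ {r} ≤ W := by
    rw [Submodule.span_le, Set.singleton_subset_iff]; exact hr
  have hlt : Submodule.span ℂ {r} < W := by
    rcases hle.lt_or_eq with h | h
    · exact h
    · exfalso
      have := finrank_span_singleton (K := ℂ) hr0
      rw [h, h2] at this
      norm_num at this
  obtain ⟨q, hqW, hqs⟩ := SetLike.exists_of_lt hlt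
  refine ⟨q, hqW, hqs, ?_⟩
  have hli : LinearIndependent ℂ ![q, r] := by
    rw [linearIndependent_fin2]
    refine ⟨by simpa using hr0, fun a ha => hqs ?_⟩
    rw [Submodule.mem_span_singleton]
    exact ⟨a, by simpa using ha⟩
  have hrank : Module.finrank ℂ (Submodule.span ℂ (Set.range ![q, r])) = 2 := by
    rw [finrank_span_eq_card hli]
    simp
  have hrange : Set.range ![q, r] = {r, q} := by
    ext z
    simp [Fin.exists_fin_two, or_comm]
  rw [hrange] at hrank
  symm
  apply Submodule.eq_of_le_of_finrank_le
  · rw [Submodule.span_le]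
    rintro z (rfl | rfl) <;> simpa
  · rw [h2, hrank]

lemma L₃_eq : L₃ = Submodule.span ℂ {canon 0 1 0 0, canon 1 0 0 1} := by
  rw [L₃]
  congr 1
  rw [canon, canon]
  norm_num

/-- `L₃` contains no perfect cube. -/
lemma L₃_no_cube : ¬ ∃ p ∈ L₃, IsPerfectCube p := by
  rintro ⟨p, hp, c, a, b, hc, hab, rfl⟩
  rw [L₃_eq, Submodule.mem_span_pair] at hp
  obtain ⟨x, y, hxy⟩ := hp
  rw [smul_canon, smul_canon, cube_canon, canon_add] at hxy
  obtain ⟨h1, h2, h3, h4⟩ := canon_inj hxy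
  have hy1 : y = c*b^3 := by linear_combination h1
  have h30 : 3*c*a^2*b = 0 := by linear_combination -h3
  have hy2 : y = -(c*a^3) := by linear_combination h4
  have hz : a = 0 ∨ b = 0 := by
    rcases mul_eq_zero.1 h30 with h | h
    · rcases mul_eq_zero.1 h with h | h
      · rcases mul_eq_zero.1 h with h | h
        · norm_num at h
        · exact absurd h hc
      · exact Or.inl (pow_eq_zero_iff (n := 2) (by norm_num) |>.1 h)
    · exact Or.inr h
  rcases hz with rfl | rfl
  · have hb3 : c * b^3 = 0 := by linear_combination -hy1 + hy2
    have hb : b = 0 := by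
      rcases mul_eq_zero.1 hb3 with h | h
      · exact absurd h hc
      · exact pow_eq_zero_iff (n := 3) (by norm_num) |>.1 h
    rcases hab with h | h
    · exact h rfl
    · exact h hb
  · have ha3 : c * a^3 = 0 := by linear_combination hy2 - hy1
    have ha : a = 0 := by
      rcases mul_eq_zero.1 ha3 with h | h
      · exact absurd h hc
      · exact pow_eq_zero_iff (n := 3) (by norm_num) |>.1 h
    rcases hab with h | h
    · exact h ha
    · exact h rfl

lemma no_cube_of_orbit {W : Submodule ℂ P2} (h : W ∈ slOrbit L₃) :
    ¬ ∃ p ∈ W, IsPerfectCube p := by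
  obtain ⟨g, rfl⟩ := h
  rintro ⟨p, hp, hcube⟩
  obtain ⟨w, hw, rfl⟩ := hp
  apply L₃_no_cube
  refine ⟨w, hw, ?_⟩
  have hcube' : IsPerfectCube (subst g w) := hcube
  have := isPerfectCube_subst g⁻¹ hcube'
  rwa [subst_inv_subst] at this
/-- Main forward direction: a Lagrangian without perfect cubes lies in the orbit of `L₃`. -/
lemma orbit_of_no_cube {W : Submodule ℂ P2} (hL : IsLagrangian W)
    (hnc : ¬ ∃ p ∈ W, IsPerfectCube p) : W ∈ slOrbit L₃ := by
  obtain ⟨hV, h2, hiso⟩ := hL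
  -- pick a basis p, q of W
  have hWbot : W ≠ ⊥ := by
    intro h; rw [h] at h2; simp at h2
  obtain ⟨p, hpW, hp0⟩ := Submodule.exists_mem_ne_zero_of_ne_bot hWbot
  obtain ⟨q, hqW, hqs, hspan⟩ := exists_basis_pair h2 hpW hp0
  -- find r in the pencil with vanishing discriminant
  obtain ⟨s, t, hst, hdisc⟩ := exists_disc_zero (cf 3 0 p) (cf 2 1 p) (cf 1 2 p) (cf 0 3 p)
      (cf 3 0 q) (cf 2 1 q) (cf 1 2 q) (cf 0 3 q)
  set r : P2 := s • p + t • q with hrdef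
  have hrW : r ∈ W := W.add_mem (W.smul_mem s hpW) (W.smul_mem t hqW)
  have hr0 : r ≠ 0 := by
    intro h0
    rcases em (t = 0) with rfl | ht
    · have hs : s ≠ 0 := fun h => hst ⟨h, rfl⟩
      have : s • p = 0 := by rw [hrdef] at h0; simpa using h0
      exact hp0 ((smul_eq_zero.1 this).resolve_left hs)
    · apply hqs
      rw [Submodule.mem_span_singleton]
      refine ⟨-(s/t), ?_⟩
      have : t • q = -(s • p) := by
        rw [hrdef] at h0
        linear_combination (norm := module) h0
      have := congrArg (fun z => (t⁻¹ : ℂ) • z) this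
      simp only [smul_smul] at this
      rw [inv_mul_cancel₀ ht, one_smul] at this
      rw [this]
      match_scalars
      field_simp
  have hrcf : ∀ i j : ℕ, cf i j r = s * cf i j p + t * cf i j q := fun i j => by
    rw [hrdef, cf_add, cf_smul, cf_smul]
  have hrdisc : disc (cf 3 0 r) (cf 2 1 r) (cf 1 2 r) (cf 0 3 r) = 0 := by
    rw [hrcf, hrcf, hrcf, hrcf]; exact hdisc
  have hrV := hV hrW
  have hrcanon := eq_canon_of_mem hrV
  have hrne : ¬(cf 3 0 r = 0 ∧ cf 2 1 r = 0 ∧ cf 1 2 r = 0 ∧ cf 0 3 r = 0) := by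
    rintro ⟨e1, e2, e3, e4⟩
    exact hr0 (by rw [hrcanon, e1, e2, e3, e4, canon_zero])
  obtain ⟨e, u, v, s', t', he, huv, hst', hfac⟩ := factor_of_disc_zero hrdisc hrne
  rw [← hrcanon] at hfac
  -- the two roots are distinct since W contains no perfect cube
  have hD : s' * v - t' * u ≠ 0 := by
    intro hD0
    apply hnc
    rcases em (v = 0) with rfl | hv
    · have hu : u ≠ 0 := fun h => huv ⟨h, rfl⟩
      have ht'0 : t' = 0 := by
        have h1 : t' * u = 0 := by linear_combination -hD0
        exact (mul_eq_zero.1 h1).resolve_right hu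
      have hk0 : s'/u ≠ 0 := by
        intro h
        rw [div_eq_zero_iff] at h
        exact hst' ⟨h.resolve_right hu, ht'0⟩
      have hs'eq : s' = s'/u * u := by field_simp
      refine ⟨r, hrW, e * (s'/u), u, 0, mul_ne_zero he hk0, Or.inl hu, ?_⟩
      rw [hfac, lf, lf, ht'0]
      rw [show (C s' : P2) = C (s'/u) * C u by rw [← C_mul, ← hs'eq]]
      simp only [C_mul, C_0]
      ring
    · have hk0 : t'/v ≠ 0 := by
        intro h
        rw [div_eq_zero_iff] at h
        have ht'0 := h.resolve_right hv
        have hs'0 : s' = 0 := by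
          have h1 : s' * v = 0 := by rw [ht'0] at hD0; linear_combination hD0
          exact (mul_eq_zero.1 h1).resolve_right hv
        exact hst' ⟨hs'0, ht'0⟩
      have ht'eq : t' = t'/v * v := by field_simp
      have hs'eq : s' = t'/v * u := by
        rw [div_mul_eq_mul_div, eq_div_iff hv]
        linear_combination hD0
      refine ⟨r, hrW, e * (t'/v), u, v, mul_ne_zero he hk0, Or.inr hv, ?_⟩
      rw [hfac, lf, lf]
      rw [show (C s' : P2) = C (t'/v) * C u by rw [← C_mul, ← hs'eq]]
      rw [show (C t' : P2) = C (t'/v) * C v by rw [← C_mul, ← ht'eq]]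
      simp only [C_mul]
      ring
  set D' : ℂ := s' * v - t' * u with hD'def
  -- the SL₂ element moving the double root to X and the simple root to Y
  have hdet : (!![s', u/D'; t', v/D'] : Matrix (Fin 2) (Fin 2) ℂ).det = 1 := by
    rw [Matrix.det_fin_two_of]
    field_simp
    rw [hD'def]
    ring
  set g₁ : Matrix.SpecialLinearGroup (Fin 2) ℂ := ⟨_, hdet⟩ with hg₁def
  have e00 : g₁.1 0 0 = s' := rfl
  have e01 : g₁.1 0 1 = u/D' := rfl
  have e10 : g₁.1 1 0 = t' := rfl
  have e11 : g₁.1 1 1 = v/D' := rfl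
  have hsub_uv : subst g₁ (lf u v) = C D' * Xv := by
    rw [subst_lf, e00, e01, e10, e11]
    rw [show u * (v/D') - v * (u/D') = 0 by field_simp; ring, show v * s' - u * t' = D' by rw [hD'def]; ring]
    rw [lf]
    simp
  have hsub_st : subst g₁ (lf s' t') = -Yv := by
    rw [subst_lf, e00, e01, e10, e11]
    have hone : s' * (v/D') - t' * (u/D') = 1 := by
      rw [show s' * (v/D') - t' * (u/D') = (s' * v - t' * u)/D' by ring, ← hD'def, div_self hD]
    rw [hone, show t' * s' - s' * t' = 0 by ring]
    rw [lf]
    simp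
  -- a second basis vector relative to r
  obtain ⟨q₂, hq₂W, hq₂s, hspan₂⟩ := exists_basis_pair h2 hrW hr0
  have hq₂V := hV hq₂W
  have hq₂canon := eq_canon_of_mem hq₂V
  set c₁ : ℂ := -(e * D'^2) with hc₁def
  have hc₁0 : c₁ ≠ 0 := by
    rw [hc₁def, neg_ne_zero]
    exact mul_ne_zero he (pow_ne_zero _ hD)
  have hr' : subst g₁ r = canon 0 c₁ 0 0 := by
    rw [hfac, map_mul, map_mul, map_pow, subst_C, hsub_uv, hsub_st, canon, hc₁def]
    simp only [C_mul, C_neg, C_pow, C_0]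
    ring
  obtain ⟨A2, B2, C2, D2, hq'⟩ : ∃ A2 B2 C2 D2, subst g₁ q₂ = canon A2 B2 C2 D2 :=
    ⟨_, _, _, _, by rw [hq₂canon, subst_canon]⟩
  -- isotropy forces the XY² coefficient of q₂' to vanish
  have hω : omegaForm (subst g₁ r) (subst g₁ q₂) = 0 := by
    rw [hrcanon, hq₂canon, omega_subst, ← hrcanon, ← hq₂canon]
    exact hiso r hrW q₂ hq₂W
  have hC2 : C2 = 0 := by
    rw [hr', hq', omega_canon] at hω
    have h3 : c₁ * C2 = 0 := by linear_combination (-3) * hω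
    exact (mul_eq_zero.1 h3).resolve_left hc₁0
  -- the reduced second basis vector
  set w₀ : P2 := q₂ - (B2/c₁) • r with hw₀def
  have hw₀W : w₀ ∈ W := W.sub_mem hq₂W (W.smul_mem _ hrW)
  have hw₀ : subst g₁ w₀ = canon A2 0 0 D2 := by
    rw [hw₀def, map_sub, map_smul, hq', hr', smul_canon, canon_sub, hC2]
    rw [show B2 - B2/c₁*c₁ = 0 by field_simp; ring]
    norm_num
  -- A2 and D2 are nonzero
  have hw₀ne : w₀ ≠ 0 := by
    intro h0
    apply hq₂s
    rw [Submodule.mem_span_singleton]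
    exact ⟨B2/c₁, by rw [hw₀def] at h0; linear_combination (norm := module) -h0⟩
  have hA2 : A2 ≠ 0 := by
    intro hA0
    rcases em (D2 = 0) with hD20 | hD20
    · apply hw₀ne
      have : subst g₁ w₀ = 0 := by rw [hw₀, hA0, hD20, canon_zero]
      have h1 := congrArg (subst g₁⁻¹) this
      rwa [subst_inv_subst, map_zero] at h1
    · apply hnc
      refine ⟨w₀, hw₀W, ?_⟩
      have hcube : IsPerfectCube (subst g₁ w₀) := by
        refine ⟨D2, -1, 0, hD20, by norm_num, ?_⟩
        rw [hw₀, hA0, canon, lf]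
        simp only [C_0, map_neg, C_1, neg_neg]
        ring
      have := isPerfectCube_subst g₁⁻¹ hcube
      rwa [subst_inv_subst] at this
  have hD2 : D2 ≠ 0 := by
    intro hD20
    apply hnc
    refine ⟨w₀, hw₀W, ?_⟩
    have hcube : IsPerfectCube (subst g₁ w₀) := by
      refine ⟨A2, 0, 1, hA2, Or.inr one_ne_zero, ?_⟩
      rw [hw₀, hD20, canon, lf]
      simp only [C_0, C_1]
      ring
    have := isPerfectCube_subst g₁⁻¹ hcube
    rwa [subst_inv_subst] at this
  -- the diagonal scaling
  obtain ⟨τ, hτ⟩ := IsAlgClosed.exists_pow_nat_eq (A2/D2) (n := 6) (by norm_num)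
  have hτ0 : τ ≠ 0 := by
    intro h
    rw [h] at hτ
    have : A2/D2 = 0 := by rw [← hτ]; norm_num
    exact (div_ne_zero hA2 hD2) this
  have hA6 : A2 = D2 * τ^6 := by
    field_simp at hτ
    linear_combination -hτ
  have hdet2 : (!![τ, 0; 0, τ⁻¹] : Matrix (Fin 2) (Fin 2) ℂ).det = 1 := by
    rw [Matrix.det_fin_two_of]
    field_simp
    norm_num
  set h : Matrix.SpecialLinearGroup (Fin 2) ℂ := ⟨_, hdet2⟩ with hhdef
  have f00 : h.1 0 0 = τ := rfl
  have f01 : h.1 0 1 = 0 := rfl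
  have f10 : h.1 1 0 = 0 := rfl
  have f11 : h.1 1 1 = τ⁻¹ := rfl
  have hh1 : subst h (canon 0 1 0 0) = canon 0 τ 0 0 := by
    rw [subst_canon, f00, f01, f10, f11]
    norm_num
    congr 1
    field_simp
  have hh2 : subst h (canon 1 0 0 1) = canon (τ^3) 0 0 (τ⁻¹^3) := by
    rw [subst_canon, f00, f01, f10, f11]
    norm_num
  -- span computations
  have hWimg : mapAct g₁ W = Submodule.span ℂ {canon 0 c₁ 0 0, canon A2 0 0 D2} := by
    rw [hspan₂, mapAct_span_pair, hr', hq']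
    rw [show (Submodule.span ℂ {canon 0 c₁ 0 0, canon A2 B2 C2 D2} : Submodule ℂ P2)
        = Submodule.span ℂ {canon 0 c₁ 0 0, canon A2 B2 C2 D2 - (B2/c₁) • canon 0 c₁ 0 0} from
      (span_pair_sub_smul _ _ _).symm]
    congr 2
    rw [smul_canon, canon_sub, hC2]
    rw [show B2 - B2/c₁*c₁ = 0 by field_simp; ring]
    norm_num
  have hLimg : mapAct h L₃ = Submodule.span ℂ {canon 0 τ 0 0, canon (τ^3) 0 0 (τ⁻¹^3)} := by
    rw [L₃_eq, mapAct_span_pair, hh1, hh2]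
  have hspan_eq : mapAct g₁ W = mapAct h L₃ := by
    rw [hWimg, hLimg]
    have k1 : canon 0 c₁ 0 0 = c₁ • canon 0 1 0 0 := by rw [smul_canon]; norm_num
    have k2 : canon A2 0 0 D2 = (A2/τ^3) • canon (τ^3) 0 0 (τ⁻¹^3) := by
      rw [smul_canon]
      rw [show A2/τ^3*τ^3 = A2 by field_simp, show A2/τ^3*τ⁻¹^3 = D2 by
        rw [hA6]; field_simp]
      norm_num
    have k3 : canon 0 τ 0 0 = τ • canon 0 1 0 0 := by rw [smul_canon]; norm_num
    rw [k1, k2, k3, span_pair_smul c₁ (A2/τ^3) hc₁0 (div_ne_zero hA2 (pow_ne_zero _ hτ0))]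
    rw [show (Submodule.span ℂ {τ • canon 0 1 0 0, canon (τ^3) 0 0 (τ⁻¹^3)} : Submodule ℂ P2)
        = Submodule.span ℂ {τ • canon 0 1 0 0, (1:ℂ) • canon (τ^3) 0 0 (τ⁻¹^3)} by rw [one_smul]]
    rw [span_pair_smul τ 1 hτ0 one_ne_zero]
  refine ⟨h * g₁⁻¹, ?_⟩
  have := mapAct_inv_eq hspan_eq
  rw [this, mapAct_mapAct]
/-- A Lagrangian `W` of `V` contains no perfect cube iff it lies in the
`SL(2,ℂ)`-orbit of `span{X²Y, X³+Y³}`; in particular `SL(2,ℂ)` acts transitively on the set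
of Lagrangians of `V` containing no perfect cube. -/
theorem statement8 :
    (∀ W : Submodule ℂ P2, IsLagrangian W →
      ((¬ ∃ p ∈ W, IsPerfectCube p) ↔ W ∈ slOrbit L₃)) ∧
    (∀ W W' : Submodule ℂ P2, IsLagrangian W → IsLagrangian W' →
      (¬ ∃ p ∈ W, IsPerfectCube p) → (¬ ∃ p ∈ W', IsPerfectCube p) →
      ∃ g : Matrix.SpecialLinearGroup (Fin 2) ℂ, mapAct g W = W') := by
  have main : ∀ W : Submodule ℂ P2, IsLagrangian W →
      ((¬ ∃ p ∈ W, IsPerfectCube p) ↔ W ∈ slOrbit L₃) := by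
    intro W hW
    exact ⟨orbit_of_no_cube hW, no_cube_of_orbit⟩
  refine ⟨main, ?_⟩
  intro W W' hW hW' hnc hnc'
  obtain ⟨g, hg⟩ := (main W hW).1 hnc
  obtain ⟨g', hg'⟩ := (main W' hW').1 hnc'
  refine ⟨g⁻¹ * g', ?_⟩
  rw [hg, mapAct_mapAct, ← mul_assoc, mul_inv_cancel, one_mul, hg']
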